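/- Let Y be a finite-dimensional real vector space, y₁,…,y_k ∈ Y linearly independent vectors, and z_i = Σ_j a_{ij} y_j for real numbers a_{ij} (1 ≤ i ≤ r, 1 ≤ j ≤ k). Then the additive subgroup of Y generated by y₁,…,y_k, z₁,…,z_r is discrete if and only if all a_{ij} are rational. -/

import Mathlib

open Finset Set Submodule

/-- If `y₁, …, y_k` are linearly independent vectors in a finite-dimensional real
vector space and `z_i = ∑_j a_{ij} y_j`, then the additive subgroup generated by
the `y_j` and `z_i` is discrete iff all `a_{ij}` are rational. -/
theorem stmt2 {Y : Type*} [NormedAddCommGroup Y] [NormedSpace ℝ Y] [FiniteDimensional ℝ Y]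
    {k r : ℕ} (y : Fin k → Y) (hy : LinearIndependent ℝ y)
    (a : Fin r → Fin k → ℝ) (z : Fin r → Y)
    (hz : ∀ i, z i = ∑ j, a i j • y j) :
    DiscreteTopology (AddSubgroup.closure (Set.range y ∪ Set.range z)) ↔
      ∀ i j, ∃ q : ℚ, a i j = (q : ℝ) := by
  classical
  set G := AddSubgroup.closure (Set.range y ∪ Set.range z) with hGdef
  constructor
  · intro hd i j
    have hGc : IsClosed (G : Set Y) := AddSubgroup.isClosed_of_discrete
    set C : ℝ := ∑ j', ‖y j'‖ with hC
    set v : ℕ → Y := fun n => (n : ℤ) • z i - ∑ j', ⌊(n : ℝ) * a i j'⌋ • y j' with hv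
    have hvG : ∀ n, v n ∈ G := by
      intro n
      refine AddSubgroup.sub_mem _ (AddSubgroup.zsmul_mem _ ?_ _)
        (AddSubgroup.sum_mem _ fun j' _ => AddSubgroup.zsmul_mem _ ?_ _)
      · exact AddSubgroup.subset_closure (Or.inr ⟨i, rfl⟩)
      · exact AddSubgroup.subset_closure (Or.inl ⟨j', rfl⟩)
    have hveq : ∀ n, v n = ∑ j', Int.fract ((n : ℝ) * a i j') • y j' := by
      intro n
      simp only [hv]
      rw [hz i, Finset.smul_sum, ← Finset.sum_sub_distrib]
      refine Finset.sum_congr rfl fun j' _ => ?_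
      rw [← Int.cast_smul_eq_zsmul ℝ (n : ℤ), ← Int.cast_smul_eq_zsmul ℝ ⌊(n : ℝ) * a i j'⌋,
        smul_smul, ← sub_smul, Int.cast_natCast, Int.fract]
    have hvC : ∀ n, ‖v n‖ ≤ C := by
      intro n
      rw [hveq n]
      refine (norm_sum_le _ _).trans ?_
      refine Finset.sum_le_sum fun j' _ => ?_
      rw [norm_smul, Real.norm_eq_abs, abs_of_nonneg (Int.fract_nonneg _)]
      nlinarith [Int.fract_lt_one ((n : ℝ) * a i j'), Int.fract_nonneg ((n : ℝ) * a i j'),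
        norm_nonneg (y j')]
    set s : Set Y := (G : Set Y) ∩ Metric.closedBall 0 C with hs
    have hsc : IsCompact s :=
      Metric.isCompact_of_isClosed_isBounded (hGc.inter Metric.isClosed_closedBall)
        (Metric.isBounded_closedBall.subset Set.inter_subset_right)
    have hdss : DiscreteTopology s :=
      DiscreteTopology.of_subset (show DiscreteTopology ((G : Set Y) : Set Y) from hd)
        Set.inter_subset_left
    have hfin : s.Finite := hsc.finite (isDiscrete_iff_discreteTopology.mpr hdss)
    haveI := hfin.to_subtype
    obtain ⟨n, m, hnm, he⟩ := Finite.exists_ne_map_eq_of_infinite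
      (fun n : ℕ => (⟨v n, hvG n, by simpa using hvC n⟩ : s))
    have hvnm : v n = v m := congrArg Subtype.val he
    have hfr : Int.fract ((n : ℝ) * a i j) = Int.fract ((m : ℝ) * a i j) := by
      have h0 : ∑ j', (Int.fract ((n : ℝ) * a i j') - Int.fract ((m : ℝ) * a i j')) • y j' = 0 := by
        simp_rw [sub_smul, Finset.sum_sub_distrib, ← hveq, hvnm, sub_self]
      have := Fintype.linearIndependent_iff.mp hy _ h0 j
      linarith [this]
    have hne : (n : ℝ) - (m : ℝ) ≠ 0 := by
      simp only [sub_ne_zero, Ne, Nat.cast_inj]; exact_mod_cast hnm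
    refine ⟨((⌊(n : ℝ) * a i j⌋ - ⌊(m : ℝ) * a i j⌋ : ℤ) : ℚ) / ((n : ℚ) - (m : ℚ)), ?_⟩
    have h1 : (n : ℝ) * a i j - ⌊(n : ℝ) * a i j⌋ = (m : ℝ) * a i j - ⌊(m : ℝ) * a i j⌋ := by
      rw [← Int.self_sub_floor, ← Int.self_sub_floor] at hfr
      · exact hfr
    push_cast
    rw [eq_div_iff hne]
    linarith [h1]
  · intro h
    choose q hq using h
    set N : ℕ := ∏ i, ∏ j, (q i j).den with hN
    have hNpos : 0 < N := Finset.prod_pos fun i _ => Finset.prod_pos fun j _ => (q i j).pos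
    have hNne : (N : ℝ) ≠ 0 := Nat.cast_ne_zero.mpr hNpos.ne'
    have hm : ∀ i j, ∃ mij : ℤ, (mij : ℚ) = q i j * N := by
      intro i j
      have hdvd : (q i j).den ∣ N := by
        refine dvd_trans (Finset.dvd_prod_of_mem (fun j' => (q i j').den) (Finset.mem_univ j)) ?_
        exact Finset.dvd_prod_of_mem (fun i' => ∏ j', (q i' j').den) (Finset.mem_univ i)
      obtain ⟨t, ht⟩ := hdvd
      refine ⟨(q i j).num * t, ?_⟩
      have hden : ((q i j).den : ℚ) ≠ 0 := Nat.cast_ne_zero.mpr (q i j).den_nz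
      have hnum : ((q i j).num : ℚ) = q i j * (q i j).den := (Rat.mul_den_eq_num _).symm
      push_cast [ht]
      rw [hnum]; ring
    choose m hmq using hm
    -- extend y to a basis of Y
    have hy' : LinearIndepOn ℝ id (Set.range y) := hy.linearIndepOn_id
    let b : Module.Basis _ ℝ Y := Module.Basis.extend hy'
    haveI : Fintype (hy'.extend (Set.subset_univ (Set.range y))) :=
      FiniteDimensional.fintypeBasisIndex b
    let u : hy'.extend (Set.subset_univ (Set.range y)) → ℝˣ :=
      fun _ => Units.mk0 ((N : ℝ)⁻¹) (inv_ne_zero hNne)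
    let b' := b.unitsSMul u
    have hb' : ∀ x, b' x = (N : ℝ)⁻¹ • (x : Y) := by
      intro x
      rw [Module.Basis.unitsSMul_apply, Module.Basis.extend_apply_self]
      rfl
    have hyb : ∀ j', y j' ∈ hy'.extend (Set.subset_univ (Set.range y)) :=
      fun j' => hy'.subset_extend _ ⟨j', rfl⟩
    have hymem : ∀ j', y j' ∈ span ℤ (Set.range b') := by
      intro j'
      have : (N : ℤ) • b' ⟨y j', hyb j'⟩ = y j' := by
        rw [hb', ← Int.cast_smul_eq_zsmul ℝ, smul_smul]
        push_cast
        rw [mul_inv_cancel₀ hNne, one_smul]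
      rw [← this]
      exact zsmul_mem (subset_span (Set.mem_range_self _)) _
    have hzmem : ∀ i, z i ∈ span ℤ (Set.range b') := by
      intro i
      rw [hz i]
      refine sum_mem fun j' _ => ?_
      have : (m i j') • b' ⟨y j', hyb j'⟩ = a i j' • y j' := by
        rw [hb', ← Int.cast_smul_eq_zsmul ℝ, smul_smul, hq i j']
        congr 1
        have : ((m i j' : ℚ) : ℝ) = ((q i j' * N : ℚ) : ℝ) := by rw [hmq]
        push_cast at this
        rw [this, mul_assoc, mul_inv_cancel₀ hNne, mul_one]
      rw [← this]
      exact zsmul_mem (subset_span (Set.mem_range_self _)) _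
    have hsub : G ≤ (span ℤ (Set.range b')).toAddSubgroup := by
      rw [hGdef]
      refine AddSubgroup.closure_le _ |>.mpr ?_
      rintro x (⟨j', rfl⟩ | ⟨i, rfl⟩)
      · exact hymem j'
      · exact hzmem i
    exact DiscreteTopology.of_subset
      (inferInstance : DiscreteTopology (span ℤ (Set.range b'))) hsub
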